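/- Let C and V be partial orders and (φ, ψ) a Galois connection between them (φ : C → V, ψ : V → C monotone with φ(c) ≤ v ⇔ c ≤ ψ(v)); set ♭ = φ∘ψ. Let D ⊆ C be any subset and v ∈ V with ψ(v) ∈ D. Then for every sieve S on v the following are equivalent: (i) for all c ∈ D with φ(c) ≤ v, the morphism φ(c) ⟶ v belongs to S; (ii) the morphism ♭(v) ⟶ v belongs to S. Consequently, every subset D of C containing all values of ψ induces the same Grothendieck topology J on V, given by J(v) = { sieves S on v | (♭(v) ⟶ v) ∈ S }. -/

import Mathlib

open CategoryTheory

/-- Let `(φ, ψ)` be a Galois connection between partial orders `C`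
and `V`, and `♭ = φ ∘ ψ`. If `D ⊆ C` contains `ψ v`, then for every sieve `S` on `v`,
the sieve contains all morphisms `φ c ⟶ v` with `c ∈ D` and `φ c ≤ v` if and only
if it contains the morphism `♭(v) ⟶ v`. Hence every subset `D` of `C` containing
all values of `ψ` induces the same (quantization) Grothendieck topology
`J(v) = { S | (♭(v) ⟶ v) ∈ S }` on `V`. -/
theorem quantization_topology_eq_of_mem
    {C V : Type*} [PartialOrder C] [PartialOrder V]
    {φ : C → V} {ψ : V → C} (gc : GaloisConnection φ ψ)
    (D : Set C) (v : V) (hD : ψ v ∈ D) (S : Sieve v) :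
    (∀ c ∈ D, ∀ h : φ c ≤ v, S.arrows (homOfLE h)) ↔
      S.arrows (homOfLE (gc.l_u_le v)) := by
  constructor
  · intro H
    exact H (ψ v) hD (gc.l_u_le v)
  · intro H c hc h
    have h1 : φ c ≤ φ (ψ v) := gc.monotone_l (gc.le_u h)
    have := S.downward_closed H (homOfLE h1)
    convert this using 1
    exact Subsingleton.elim _ _
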